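/- arXiv:2005.09125 — 3 statements merged into one kernel-verified Lean document; each statement's English description precedes it below -/
import Mathlib

section
/- The complementary NBW A^c of an FANBW produced by the (N,C,B)-construction is limit deterministic: Q^c partitions into Q^c_N ⊆ 2^Q and Q^c_D ⊆ 2^Q × 2^Q × 2^Q such that all accepting states lie in Q^c_D, and every state in Q^c_D has at most one a-successor for each letter a, with all those successors again in Q^c_D. -/
open Classical

variable {Q : Type} {A : Type}

/-- A nondeterministic Büchi automaton on words (NBW). -/
structure NBW (Q : Type) (A : Type) where
  I : Set Q
  δ : Q → A → Set Q
  F : Set Q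

namespace NBW

/-- Transition function extended to sets of states. -/
def δset (M : NBW Q A) (S : Set Q) (a : A) : Set Q := ⋃ q ∈ S, M.δ q a

/-- A run of `M` on the word `w`. -/
def IsRun (M : NBW Q A) (w : ℕ → A) (ρ : ℕ → Q) : Prop :=
  ρ 0 ∈ M.I ∧ ∀ i, ρ (i + 1) ∈ M.δ (ρ i) (w i)

/-- An accepting run: a run visiting accepting states infinitely often. -/
def IsAccRun (M : NBW Q A) (w : ℕ → A) (ρ : ℕ → Q) : Prop :=
  M.IsRun w ρ ∧ ∀ n, ∃ m ≥ n, ρ m ∈ M.F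

/-- `M` accepts the word `w`. -/
def Accepts (M : NBW Q A) (w : ℕ → A) : Prop := ∃ ρ, M.IsAccRun w ρ

/-- `M` is finitely ambiguous (an FANBW): each word has finitely many accepting runs. -/
def FA (M : NBW Q A) : Prop := ∀ w : ℕ → A, {ρ | M.IsAccRun w ρ}.Finite

/-- Completeness of the transition function. -/
def Complete (M : NBW Q A) : Prop := ∀ (q : Q) (a : A), (M.δ q a).Nonempty

/-- Reverse determinism: each state has at most one `a`-predecessor. -/
def ReverseDet (M : NBW Q A) : Prop :=
  ∀ (q' : Q) (a : A), {q | q' ∈ M.δ q a}.Subsingleton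

/-- The set of states at level `l` of the run DAG `G_{w,M}`. -/
def V (M : NBW Q A) (w : ℕ → A) : ℕ → Set Q
  | 0 => M.I
  | l + 1 => M.δset (V M w l) (w l)

/-- Edge of the run DAG `G_{w,M}` from `⟨q,l⟩` to `⟨q',l+1⟩`. -/
def Edge (M : NBW Q A) (w : ℕ → A) (l : ℕ) (q q' : Q) : Prop :=
  q ∈ M.V w l ∧ q' ∈ M.δ q (w l)

/-- An ω-branch of the run DAG `G_{w,M}` (identified with its sequence of states). -/
def IsBranch (M : NBW Q A) (w : ℕ → A) (b : ℕ → Q) : Prop :=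
  b 0 ∈ M.I ∧ ∀ l, M.Edge w l (b l) (b (l + 1))

/-- Edge of the co-deterministic run DAG `G^e_{w,M}`: only the edge from the
minimal-index predecessor (w.r.t. the linear order enumerating `Q`) is kept. -/
def EdgeE [LinearOrder Q] (M : NBW Q A) (w : ℕ → A) (l : ℕ) (q q' : Q) : Prop :=
  IsLeast {p | p ∈ M.V w l ∧ q' ∈ M.δ p (w l)} q

/-- An ω-branch of the co-deterministic run DAG `G^e_{w,M}`. -/
def IsBranchE [LinearOrder Q] (M : NBW Q A) (w : ℕ → A) (b : ℕ → Q) : Prop :=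
  b 0 ∈ M.I ∧ ∀ l, M.EdgeE w l (b l) (b (l + 1))

/-- A branch of `G^e_{w,M}` starting from vertex `⟨q,l⟩`. -/
def BranchFromE [LinearOrder Q] (M : NBW Q A) (w : ℕ → A) (l : ℕ) (q : Q) (b : ℕ → Q) : Prop :=
  b 0 = q ∧ q ∈ M.V w l ∧ ∀ i, M.EdgeE w (l + i) (b i) (b (i + 1))

/-- The vertex `⟨q,l⟩` of `G^e_{w,M}` is finite: no infinite branch starts from it. -/
def FiniteVertexE [LinearOrder Q] (M : NBW Q A) (w : ℕ → A) (l : ℕ) (q : Q) : Prop :=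
  ¬ ∃ b, M.BranchFromE w l q b

/-- The minimal set of predecessors `S_min` of `δ(S,b)` within `S`. -/
def Smin [LinearOrder Q] (M : NBW Q A) (S : Set Q) (b : A) : Set Q :=
  {q | ∃ q' ∈ M.δset S b, IsLeast {p | p ∈ S ∧ q' ∈ M.δ p b} q}

/-- The reduced transition function `δ^e` for the level with state set `S` and letter `b`. -/
def δe [LinearOrder Q] (M : NBW Q A) (S : Set Q) (b : A) (S₁ : Set Q) : Set Q :=
  M.δset (S₁ ∩ M.Smin S b) b

/-- The reduced transition function at level `ℓ` of `G^e_{w,M}`. -/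
def δeAt [LinearOrder Q] (M : NBW Q A) (w : ℕ → A) (ℓ : ℕ) (S₁ : Set Q) : Set Q :=
  M.δe (M.V w ℓ) (w ℓ) S₁

end NBW

section DAG

variable (E : ℕ → Q → Q → Prop) (U : Set (Q × ℕ))

/-- An infinite branch from vertex `v` staying inside the vertex set `U`,
following the edge relation `E`. -/
def DagBranchIn (v : Q × ℕ) (b : ℕ → Q) : Prop :=
  b 0 = v.1 ∧ (∀ i, (b i, v.2 + i) ∈ U) ∧ ∀ i, E (v.2 + i) (b i) (b (i + 1))

/-- Vertex `v` is finite in the sub-DAG `U`: no infinite branch from `v` inside `U`. -/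
def DagFiniteIn (v : Q × ℕ) : Prop := ¬ ∃ b, DagBranchIn E U v b

/-- One-step reachability inside `U`. -/
def DagStep (v v' : Q × ℕ) : Prop :=
  v ∈ U ∧ v' ∈ U ∧ v'.2 = v.2 + 1 ∧ E v.2 v.1 v'.1

/-- Vertex `v` is F-free in `U`: not finite, and no F-vertex reachable from it in `U`. -/
def DagFFreeIn (F : Set Q) (v : Q × ℕ) : Prop :=
  ¬ DagFiniteIn E U v ∧ ∀ v', Relation.ReflTransGen (DagStep E U) v v' → v'.1 ∉ F

/-- The rank-stripping sequence of sub-DAGs: `G⁰ = G0`; `G^{2i+1}` removes the finite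
vertices of `G^{2i}`; `G^{2i+2}` removes the F-free vertices of `G^{2i+1}`. -/
def DagStrip (F : Set Q) (G0 : Set (Q × ℕ)) : ℕ → Set (Q × ℕ)
  | 0 => G0
  | i + 1 =>
      let U' := DagStrip F G0 i
      if i % 2 = 0 then U' \ {v | DagFiniteIn E U' v}
      else U' \ {v | DagFFreeIn E U' F v}

end DAG

namespace NBW

/-- The vertex set of the run DAG `G_{w,M}` (also of `G^e_{w,M}`). -/
def DagVertices (M : NBW Q A) (w : ℕ → A) : Set (Q × ℕ) := {v | v.1 ∈ M.V w v.2}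

/-- Level rankings with maximum rank 2: `none` plays the role of `⊥`. -/
def IsLR (M : NBW Q A) (f : Q → Option (Fin 3)) : Prop :=
  ∀ q r, f q = some r → q ∈ M.F → (r : ℕ) % 2 = 0

/-- Domain of a level ranking. -/
def rankDom (f : Q → Option (Fin 3)) : Set Q := {q | (f q).isSome}

/-- Coverage relation `f' ⪯^{δ^e}_a f` for level rankings. -/
def Covers [LinearOrder Q] (M : NBW Q A) (a : A) (f f' : Q → Option (Fin 3)) : Prop :=
  (∀ q r q', f q = some r → q' ∈ M.δe (rankDom f) a {q} →
    ∃ r', f' q' = some r' ∧ r' ≤ r) ∧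
  (∀ q', (∀ q, q' ∈ M.δe (rankDom f) a {q} → f q = none) → f' q' = none)

/-- The rank-based complement of an FANBW, with maximum rank 2 and the reduced
transition function `δ^e`. -/
noncomputable def rankComplement [LinearOrder Q] (M : NBW Q A) :
    NBW ((Q → Option (Fin 3)) × Set Q) A where
  I := {s | s.2 = ∅ ∧ ∀ q, s.1 q = if q ∈ M.I then some 2 else none}
  δ := fun s a =>
    {s' | M.Covers a s.1 s'.1 ∧ M.IsLR s'.1 ∧
      ((s.2 ≠ ∅ ∧
          s'.2 = M.δe (rankDom s.1) a s.2 \ {q | ∃ r, s'.1 q = some r ∧ (r : ℕ) % 2 = 1}) ∨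
       (s.2 = ∅ ∧ s'.2 = {q | ∃ r, s'.1 q = some r ∧ (r : ℕ) % 2 = 0}))}
  F := {s | s.2 = ∅}

/-- Slice-based DAG `G^s_{w,M}`: the set at position `p` of level `l`.
Level `0` consists of `I \ F` (position 0) and `I ∩ F` (position 1); from the
set at position `j` of level `l`, position `2j` of level `l+1` holds the non-`F`
successors and position `2j+1` the `F`-successors, keeping only the rightmost
occurrence of each state. -/
noncomputable def sliceSet (M : NBW Q A) (w : ℕ → A) : ℕ → ℕ → Set Q
  | 0, p => if p = 0 then M.I \ M.F else if p = 1 then M.I ∩ M.F else ∅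
  | l + 1, p =>
      let S' : ℕ → Set Q := fun q =>
        if q % 2 = 0 then M.δset (sliceSet M w l (q / 2)) (w l) \ M.F
        else M.δset (sliceSet M w l (q / 2)) (w l) ∩ M.F
      S' p \ ⋃ q ∈ Set.Ioi p, S' q

/-- An ω-branch of the slice-based DAG `G^s_{w,M}`, given by the positions it visits. -/
def IsSliceBranch (M : NBW Q A) (w : ℕ → A) (g : ℕ → ℕ) : Prop :=
  (∀ l, M.sliceSet w l (g l) ≠ ∅) ∧ ∀ l, g (l + 1) / 2 = g l

/-- There is an infinite branch of `G^s_{w,M}` starting from position `p` of level `l`. -/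
def SliceBranchFrom (M : NBW Q A) (w : ℕ → A) (l p : ℕ) : Prop :=
  ∃ g : ℕ → ℕ, g 0 = p ∧ (∀ i, M.sliceSet w (l + i) (g i) ≠ ∅) ∧ ∀ i, g (i + 1) / 2 = g i

/-- Accepting-phase transition of the `(N,C,B)` construction. -/
noncomputable def ncbStep [LinearOrder Q] (M : NBW Q A) (a : A)
    (t : Set Q × Set Q × Set Q) : Set Q × Set Q × Set Q :=
  (M.δe t.1 a t.1,
   M.δe t.1 a t.2.1 ∪ (M.δe t.1 a t.1 ∩ M.F),
   if t.2.2 = ∅ then M.δe t.1 a t.2.1 ∪ (M.δe t.1 a t.1 ∩ M.F) else M.δe t.1 a t.2.2)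

/-- The slice-based specialized complement of an FANBW: the `(N,C,B)` construction. -/
noncomputable def ncbComplement [LinearOrder Q] (M : NBW Q A) :
    NBW (Set Q ⊕ Set Q × Set Q × Set Q) A where
  I := {Sum.inl M.I}
  δ := fun s a =>
    match s with
    | Sum.inl S => {Sum.inl (M.δe S a S), Sum.inr (M.ncbStep a (S, S ∩ M.F, S ∩ M.F))}
    | Sum.inr t => {Sum.inr (M.ncbStep a t)}
  F := {s | ∃ t : Set Q × Set Q × Set Q, s = Sum.inr t ∧ t.2.2 = ∅}

/-- Trajectory of the deterministic accepting phase of the `(N,C,B)` construction. -/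
noncomputable def ncbTraj [LinearOrder Q] (M : NBW Q A) (w : ℕ → A)
    (t₀ : Set Q × Set Q × Set Q) : ℕ → Set Q × Set Q × Set Q
  | 0 => t₀
  | i + 1 => M.ncbStep (w i) (ncbTraj M w t₀ i)

end NBW

/-- the `(N,C,B)` complement of an FANBW is limit deterministic: its
state set partitions into the initial-phase part `Q^c_N` (the `inl` states) and the
accepting-phase part `Q^c_D` (the `inr` states), all accepting states lie in `Q^c_D`,
`Q^c_D` is closed under transitions, and every state of `Q^c_D` has at most one
`a`-successor for each letter `a`. -/
theorem ncbComplement_limit_deterministic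
    [LinearOrder Q] (M : NBW Q A) :
    (∀ s ∈ (M.ncbComplement).F, ∃ t : Set Q × Set Q × Set Q, s = Sum.inr t) ∧
    (∀ (t : Set Q × Set Q × Set Q) (a : A),
      ∀ s' ∈ (M.ncbComplement).δ (Sum.inr t) a,
        ∃ t' : Set Q × Set Q × Set Q, s' = Sum.inr t') ∧
    (∀ (t : Set Q × Set Q × Set Q) (a : A),
      ((M.ncbComplement).δ (Sum.inr t) a).Subsingleton) := by
  refine ⟨fun s hs => ?_, fun t a s' hs' => ?_, fun t a x hx y hy => ?_⟩
  · obtain ⟨t, ht, -⟩ := hs; exact ⟨t, ht⟩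
  · simp only [NBW.ncbComplement, Set.mem_singleton_iff] at hs'
    exact ⟨_, hs'⟩
  · simp only [NBW.ncbComplement, Set.mem_singleton_iff] at hx hy
    rw [hx, hy]
end

section
/- Subsumption between macrostates of the (N,C,B)-complement of an FANBW: if m = (N,C,B) and m' = (N',C',B') are accepting-phase macrostates of A^c with N = N' and C ⊆ C', then L((A^c)^{m'}) ⊆ L((A^c)^m). -/
open Classical

variable {Q : Type} {A : Type}

namespace NBW
section Aux

variable [LinearOrder Q]

lemma δe_mono (M : NBW Q A) (S : Set Q) (a : A) {S₁ S₂ : Set Q} (h : S₁ ⊆ S₂) :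
    M.δe S a S₁ ⊆ M.δe S a S₂ := by
  intro x hx
  simp only [NBW.δe, NBW.δset, Set.mem_iUnion] at hx ⊢
  obtain ⟨q, ⟨h1, h2⟩, h3⟩ := hx
  exact ⟨q, ⟨h h1, h2⟩, h3⟩

lemma ncb_traj_inv (M : NBW Q A) (w : ℕ → A) (N C B N' C' B' : Set Q)
    (hBC : B ⊆ C) (hBC' : B' ⊆ C') (hNN : N = N') (hCC : C ⊆ C') (i : ℕ) :
    (M.ncbTraj w (N, C, B) i).1 = (M.ncbTraj w (N', C', B') i).1 ∧
    (M.ncbTraj w (N, C, B) i).2.1 ⊆ (M.ncbTraj w (N', C', B') i).2.1 ∧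
    (M.ncbTraj w (N, C, B) i).2.2 ⊆ (M.ncbTraj w (N, C, B) i).2.1 := by
  induction i with
  | zero => exact ⟨hNN, hCC, hBC⟩
  | succ i ih =>
    obtain ⟨hN, hC, hB⟩ := ih
    set t := M.ncbTraj w (N, C, B) i
    set t' := M.ncbTraj w (N', C', B') i
    have hstep : M.ncbTraj w (N, C, B) (i + 1) = M.ncbStep (w i) t := rfl
    have hstep' : M.ncbTraj w (N', C', B') (i + 1) = M.ncbStep (w i) t' := rfl
    rw [hstep, hstep']
    unfold NBW.ncbStep
    refine ⟨by rw [hN], ?_, ?_⟩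
    · exact Set.union_subset_union (hN ▸ M.δe_mono t.1 (w i) hC)
        (Set.inter_subset_inter_left _ (le_of_eq (by rw [hN])))
    · by_cases hBe : t.2.2 = ∅
      · simp [hBe]
      · simp only [hBe, if_neg hBe]
        exact (M.δe_mono t.1 (w i) hB).trans Set.subset_union_left

lemma ncb_run_eq (M : NBW Q A) (w : ℕ → A) (t₀ : Set Q × Set Q × Set Q)
    (ρ : ℕ → Set Q ⊕ Set Q × Set Q × Set Q)
    (h : ({ M.ncbComplement with I := {Sum.inr t₀} } : NBW _ A).IsRun w ρ) :
    ∀ i, ρ i = Sum.inr (M.ncbTraj w t₀ i) := by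
  intro i
  induction i with
  | zero => exact h.1
  | succ i ih =>
    have h2 := h.2 i
    rw [ih] at h2
    exact (by simpa [NBW.ncbComplement] using h2 : ρ (i + 1) = Sum.inr (M.ncbStep (w i) (M.ncbTraj w t₀ i)))

end Aux
end NBW

/-- subsumption between macrostates of the `(N,C,B)` complement of an
FANBW: if `m = (N,C,B)` and `m' = (N',C',B')` are accepting-phase macrostates with
`N = N'` and `C ⊆ C'`, then `L((M^c)^{m'}) ⊆ L((M^c)^m)`. -/
theorem ncb_macrostate_subsumption
    [Fintype Q] [LinearOrder Q] (M : NBW Q A) (hFA : M.FA)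
    (N C B N' C' B' : Set Q)
    (hBC : B ⊆ C) (hCN : C ⊆ N) (hBC' : B' ⊆ C') (hCN' : C' ⊆ N')
    (hNN : N = N') (hCC : C ⊆ C') (w : ℕ → A) :
    ({ M.ncbComplement with I := {Sum.inr (N', C', B')} } : NBW _ A).Accepts w →
    ({ M.ncbComplement with I := {Sum.inr (N, C, B)} } : NBW _ A).Accepts w := by
  rintro ⟨ρ, hrun, hacc⟩
  have hρ := M.ncb_run_eq w (N', C', B') ρ hrun
  set t : ℕ → Set Q × Set Q × Set Q := M.ncbTraj w (N, C, B) with ht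
  set t' : ℕ → Set Q × Set Q × Set Q := M.ncbTraj w (N', C', B') with ht'
  have hinv := fun i => M.ncb_traj_inv w N C B N' C' B' hBC hBC' hNN hCC i
  -- B'-emptiness happens infinitely often
  have hacc' : ∀ n, ∃ i ≥ n, (t' i).2.2 = ∅ := by
    intro n
    obtain ⟨m, hm, hF⟩ := hacc n
    refine ⟨m, hm, ?_⟩
    rw [hρ m] at hF
    obtain ⟨u, hu, hue⟩ := hF
    obtain rfl : t' m = u := Sum.inr.inj hu
    exact hue
  -- key: B-emptiness happens infinitely often
  have hBempty : ∀ n, ∃ i ≥ n, (t i).2.2 = ∅ := by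
    intro n
    by_contra hcon
    push_neg at hcon
    have hne : ∀ i ≥ n, (t i).2.2 ≠ ∅ := fun i hi => Set.nonempty_iff_ne_empty.mp (hcon i hi)
    obtain ⟨j, hj, hje⟩ := hacc' n
    -- successor B of a nonempty B evolves by δe
    have hBstep : ∀ i, (t i).2.2 ≠ ∅ → (t (i + 1)).2.2 = M.δe (t i).1 (w i) (t i).2.2 := by
      intro i hi
      show (M.ncbStep (w i) (t i)).2.2 = _
      simp [NBW.ncbStep, hi]
    have hBstep' : ∀ i, (t' i).2.2 ≠ ∅ →
        (t' (i + 1)).2.2 = M.δe (t' i).1 (w i) (t' i).2.2 := by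
      intro i hi
      show (M.ncbStep (w i) (t' i)).2.2 = _
      simp [NBW.ncbStep, hi]
    -- base: B_{j+1} ⊆ B'_{j+1}
    have hbase : (t (j + 1)).2.2 ⊆ (t' (j + 1)).2.2 := by
      have h1 : (t (j + 1)).2.2 = M.δe (t j).1 (w j) (t j).2.2 := hBstep j (hne j hj)
      have h2 : (t' (j + 1)).2.2 = (t' (j + 1)).2.1 := by
        show (M.ncbStep (w j) (t' j)).2.2 = (M.ncbStep (w j) (t' j)).2.1
        simp [NBW.ncbStep, hje]
      rw [h1, h2]
      calc M.δe (t j).1 (w j) (t j).2.2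
          ⊆ M.δe (t j).1 (w j) (t j).2.1 := M.δe_mono _ _ ((hinv j).2.2)
        _ ⊆ M.δe (t' j).1 (w j) (t' j).2.1 := by rw [(hinv j).1]; exact M.δe_mono _ _ (hinv j).2.1
        _ ⊆ (M.ncbStep (w j) (t' j)).2.1 := Set.subset_union_left
    -- there is a later B'-empty time; take the first after j+1
    obtain ⟨j₂, hj₂, hj₂e⟩ := hacc' (j + 1)
    have hex : ∃ k, (t' (j + 1 + k)).2.2 = ∅ := ⟨j₂ - (j + 1), by
      rwa [Nat.add_sub_cancel' hj₂]⟩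
    set k₀ := Nat.find hex with hk₀
    have hfind := Nat.find_spec hex
    -- chain: B_{j+1+k} ⊆ B'_{j+1+k} for k ≤ k₀
    have hchain : ∀ k ≤ k₀, (t (j + 1 + k)).2.2 ⊆ (t' (j + 1 + k)).2.2 := by
      intro k hk
      induction k with
      | zero => exact hbase
      | succ k ihk =>
        have hk' : k < k₀ := lt_of_lt_of_le (Nat.lt_succ_self k) hk
        have hne' : (t' (j + 1 + k)).2.2 ≠ ∅ := Nat.find_min hex hk'
        have ihk' := ihk (le_of_lt hk')
        have hneB : (t (j + 1 + k)).2.2 ≠ ∅ := hne _ (by omega)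
        have e1 : j + 1 + (k + 1) = (j + 1 + k) + 1 := by omega
        rw [e1, hBstep _ hneB, hBstep' _ hne', (hinv (j + 1 + k)).1]
        exact M.δe_mono _ _ ihk'
    have : (t (j + 1 + k₀)).2.2 = ∅ :=
      Set.subset_empty_iff.mp (hfind ▸ hchain k₀ le_rfl)
    exact hne _ (by omega) this
  -- build the accepting run from (N, C, B)
  refine ⟨fun i => Sum.inr (t i), ⟨rfl, ?_⟩, ?_⟩
  · intro i
    simp [NBW.ncbComplement]
    rfl
  · intro n
    obtain ⟨i, hi, hie⟩ := hBempty n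
    exact ⟨i, hi, ⟨t i, rfl, hie⟩⟩
end

section
/- If A is an FANBW, then for any word w the co-deterministic run DAG G^e_{w,A} is accepting iff the original run DAG G_{w,A} is accepting; moreover if G_{w,A} has m < ∞ accepting ω-branches then G^e_{w,A} has at least one and at most m accepting ω-branches. -/
open Classical

variable {Q : Type} {A : Type}

section Aux

lemma aux_exists_least [Fintype Q] [LinearOrder Q] {s : Set Q} (hs : s.Nonempty) :
    ∃ q, IsLeast s q := by
  obtain ⟨q, hq, hmin⟩ := Set.exists_min_image s id (Set.toFinite s) hs
  exact ⟨q, hq, fun p hp => hmin p hp⟩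

lemma aux_exists_back [Fintype Q] [LinearOrder Q] (M : NBW Q A) (w : ℕ → A) :
    ∀ n, ∀ q ∈ M.V w n, ∃ c : ℕ → Q, c n = q ∧ c 0 ∈ M.I ∧
      ∀ l < n, M.EdgeE w l (c l) (c (l + 1)) := by
  intro n
  induction n with
  | zero =>
    intro q hq
    exact ⟨fun _ => q, rfl, hq, fun l hl => absurd hl (Nat.not_lt_zero l)⟩
  | succ n ih =>
    intro q hq
    have hq' : ∃ p ∈ M.V w n, q ∈ M.δ p (w n) := by
      simpa [NBW.V, NBW.δset] using hq
    obtain ⟨p₀, hp₀, hp₀q⟩ := hq'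
    have hne : {p | p ∈ M.V w n ∧ q ∈ M.δ p (w n)}.Nonempty := ⟨p₀, hp₀, hp₀q⟩
    obtain ⟨p, hpleast⟩ := aux_exists_least hne
    obtain ⟨c, hcn, hc0, hce⟩ := ih p hpleast.1.1
    refine ⟨fun l => if l ≤ n then c l else q, by simp, by simpa using hc0, ?_⟩
    intro l hl
    rcases Nat.lt_succ_iff_lt_or_eq.mp hl with hl' | hl'
    · have h1 : l ≤ n := le_of_lt hl'
      have h2 : l + 1 ≤ n := hl'
      simpa [h1, h2] using hce l hl'
    · subst hl'
      have h1 : l ≤ l := le_refl l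
      have h2 : ¬ (l + 1 ≤ l) := by omega
      simpa [h1, h2, hcn, NBW.EdgeE] using hpleast

end Aux

/-- for an FANBW `M` and any word `w`, the co-deterministic run DAG
`G^e_{w,M}` is accepting iff the run DAG `G_{w,M}` is accepting; moreover, if `G_{w,M}`
has finitely many (and at least one) accepting ω-branches, then `G^e_{w,M}` has at
least one and at most that many accepting ω-branches. -/
theorem codet_dag_accepting_iff_and_branch_counts
    [Fintype Q] [LinearOrder Q] (M : NBW Q A) (hFA : M.FA) (w : ℕ → A) :
    ((∃ b, M.IsBranchE w b ∧ ∀ n, ∃ m ≥ n, b m ∈ M.F) ↔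
      (∃ b, M.IsBranch w b ∧ ∀ n, ∃ m ≥ n, b m ∈ M.F)) ∧
    ({b : ℕ → Q | M.IsBranch w b ∧ ∀ n, ∃ m ≥ n, b m ∈ M.F}.Finite →
     {b : ℕ → Q | M.IsBranch w b ∧ ∀ n, ∃ m ≥ n, b m ∈ M.F}.Nonempty →
      ({b : ℕ → Q | M.IsBranchE w b ∧ ∀ n, ∃ m ≥ n, b m ∈ M.F}.Nonempty ∧
       {b : ℕ → Q | M.IsBranchE w b ∧ ∀ n, ∃ m ≥ n, b m ∈ M.F}.Finite ∧
       {b : ℕ → Q | M.IsBranchE w b ∧ ∀ n, ∃ m ≥ n, b m ∈ M.F}.ncard ≤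
         {b : ℕ → Q | M.IsBranch w b ∧ ∀ n, ∃ m ≥ n, b m ∈ M.F}.ncard)) := by
  classical
  have hsub : {b : ℕ → Q | M.IsBranchE w b ∧ ∀ n, ∃ m ≥ n, b m ∈ M.F} ⊆
      {b : ℕ → Q | M.IsBranch w b ∧ ∀ n, ∃ m ≥ n, b m ∈ M.F} := by
    rintro b ⟨⟨h0, he⟩, hacc⟩
    exact ⟨⟨h0, fun l => (he l).1⟩, hacc⟩
  have hmain : (∃ b, M.IsBranch w b ∧ ∀ n, ∃ m ≥ n, b m ∈ M.F) →
      ∃ b, M.IsBranchE w b ∧ ∀ n, ∃ m ≥ n, b m ∈ M.F := by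
    rintro ⟨ρ, hρb, hρa⟩
    have hρV : ∀ l, ρ l ∈ M.V w l := fun l => (hρb.2 l).1
    choose c hc1 hc2 hc3 using fun n => aux_exists_back M w n (ρ n) (hρV n)
    set bn : ℕ → ℕ → Q := fun n l => if l < n then c n l else ρ l with hbn
    have hbval : ∀ n l, l < n → bn n l = c n l := by
      intro n l hl; simp [hbn, hl]
    have hbval' : ∀ n l, n ≤ l → bn n l = ρ l := by
      intro n l hl; simp [hbn, Nat.not_lt.mpr hl]
    have hbsucc : ∀ n l, l < n → bn n (l + 1) = c n (l + 1) := by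
      intro n l hl
      rcases Nat.lt_or_ge (l + 1) n with h | h
      · exact hbval n (l + 1) h
      · have : l + 1 = n := le_antisymm hl h
        rw [hbval' n (l + 1) h, this, hc1]
    have hbE : ∀ n l, l < n → M.EdgeE w l (bn n l) (bn n (l + 1)) := by
      intro n l hl
      rw [hbval n l hl, hbsucc n l hl]
      exact hc3 n l hl
    have hbacc : ∀ n, bn n ∈ {ρ | M.IsAccRun w ρ} := by
      intro n
      refine ⟨⟨?_, ?_⟩, ?_⟩
      · rcases Nat.eq_zero_or_pos n with h | h
        · rw [hbval' n 0 h.le]; exact hρb.1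
        · rw [hbval n 0 h]; exact hc2 n
      · intro l
        rcases Nat.lt_or_ge l n with hl | hl
        · exact (hbE n l hl).1.2
        · rw [hbval' n l hl, hbval' n (l + 1) (le_trans hl (Nat.le_succ l))]
          exact (hρb.2 l).2
      · intro N
        obtain ⟨m, hm, hmF⟩ := hρa (max N n)
        refine ⟨m, le_trans (le_max_left N n) hm, ?_⟩
        rw [hbval' n m (le_trans (le_max_right N n) hm)]
        exact hmF
    have hfin : {ρ | M.IsAccRun w ρ}.Finite := hFA w
    haveI : Finite {ρ | M.IsAccRun w ρ} := hfin.to_subtype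
    obtain ⟨y, hy⟩ := Finite.exists_infinite_fiber
      (fun n => (⟨bn n, hbacc n⟩ : {ρ | M.IsAccRun w ρ}))
    have hyinf : {n | bn n = (y : ℕ → Q)}.Infinite := by
      have := Set.infinite_coe_iff.mp hy
      refine this.mono ?_
      intro n hn
      have : (⟨bn n, hbacc n⟩ : {ρ | M.IsAccRun w ρ}) = y := hn
      simpa using congrArg Subtype.val this
    refine ⟨(y : ℕ → Q), ⟨y.2.1.1, ?_⟩, y.2.2⟩
    intro l
    obtain ⟨n, hn, hln⟩ := hyinf.exists_gt l
    have := hbE n l hln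
    rwa [hn] at this
  refine ⟨⟨fun ⟨b, hb⟩ => ⟨b, hsub hb⟩, hmain⟩, ?_⟩
  intro hfin hne
  obtain ⟨b, hb⟩ := hne
  obtain ⟨b', hb'⟩ := hmain ⟨b, hb.1, hb.2⟩
  exact ⟨⟨b', hb'⟩, hfin.subset hsub, Set.ncard_le_ncard hsub hfin⟩
end
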